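/- Let E be a real Hilbert space, α > 0, and let A : E → ℝ be twice continuously differentiable with A''(λ)(v, v) ≥ α·‖v‖² for all λ, v ∈ E. Define the symmetric divergence D_sym(λ, λ') := ⟨∇A(λ) − ∇A(λ'), λ − λ'⟩ (which equals the sum of the Bregman divergence A(λ) − A(λ') − ⟨∇A(λ'), λ − λ'⟩ and the reversed divergence A(λ') − A(λ) − ⟨∇A(λ), λ' − λ⟩). Then for all λ, λ' ∈ E, the gradient of D_sym in its first argument satisfies ⟨λ − λ', ∇₁D_sym(λ, λ')⟩ ≥ 2α·‖λ − λ'‖²; that is, the symmetric divergence satisfies assumption A6 with constant 2α. -/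

import Mathlib

open scoped RealInnerProductSpace

open InnerProductSpace

/-- Strong monotonicity of the gradient from the second-derivative lower bound. -/
lemma aux_strong_mono {E : Type*} [NormedAddCommGroup E] [InnerProductSpace ℝ E]
    (α : ℝ) (A : E → ℝ) (hA : ContDiff ℝ 2 A)
    (hcoer : ∀ lam v : E, fderiv ℝ (fderiv ℝ A) lam v v ≥ α * ‖v‖ ^ 2)
    (x y : E) :
    fderiv ℝ A x (x - y) - fderiv ℝ A y (x - y) ≥ α * ‖x - y‖ ^ 2 := by
  set w := x - y with hw
  have hA' : ContDiff ℝ 1 (fderiv ℝ A) := hA.fderiv_right (by norm_num)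
  set c : ℝ := α * ‖w‖ ^ 2 with hc
  set g : ℝ → ℝ := fun t => fderiv ℝ A (y + t • w) w with hg
  have hder : ∀ t : ℝ, HasDerivAt g (fderiv ℝ (fderiv ℝ A) (y + t • w) w w) t := by
    intro t
    have hp : HasDerivAt (fun t : ℝ => y + t • w) w t := by
      simpa using ((hasDerivAt_id t).smul_const w).const_add y
    have hf : HasFDerivAt (fderiv ℝ A) (fderiv ℝ (fderiv ℝ A) (y + t • w)) (y + t • w) :=
      (hA'.differentiable one_ne_zero (y + t • w)).hasFDerivAt
    have h1 : HasDerivAt (fun t : ℝ => fderiv ℝ A (y + t • w))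
        (fderiv ℝ (fderiv ℝ A) (y + t • w) w) t := hf.comp_hasDerivAt t hp
    have := (ContinuousLinearMap.apply ℝ ℝ w).hasFDerivAt.comp_hasDerivAt t h1
    exact this
  set h : ℝ → ℝ := fun t => g t - c * t with hh
  have hderh : ∀ t : ℝ, HasDerivAt h (fderiv ℝ (fderiv ℝ A) (y + t • w) w w - c) t := by
    intro t
    have := (hder t).sub ((hasDerivAt_id t).const_mul c)
    simp only [mul_one] at this
    exact this
  have hmono : Monotone h := by
    apply monotone_of_deriv_nonneg
    · intro t; exact ((hderh t).differentiableAt : DifferentiableAt ℝ h t)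
    · intro t
      rw [(hderh t).deriv]
      have := hcoer (y + t • w) w
      linarith
  have h01 : h 0 ≤ h 1 := hmono (by norm_num)
  have hg0 : g 0 = fderiv ℝ A y w := by simp [hg]
  have hg1 : g 1 = fderiv ℝ A x w := by
    have hx : y + (1 : ℝ) • w = x := by rw [one_smul, hw]; abel
    simp only [hg, hx]
  simp only [hh, mul_zero, mul_one, sub_zero] at h01
  rw [hg0, hg1] at h01
  linarith

/-- The symmetric divergence `D_sym(λ, λ') := ⟨∇A(λ) − ∇A(λ'), λ − λ'⟩` of a twice
continuously differentiable `A` with `A''(λ)(v, v) ≥ α‖v‖²` everywhere satisfies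
`⟨λ − λ', ∇₁D_sym(λ, λ')⟩ ≥ 2α‖λ − λ'‖²`, i.e. assumption A6 with constant `2α`. -/
theorem stmt_9 {E : Type*} [NormedAddCommGroup E] [InnerProductSpace ℝ E] [CompleteSpace E]
    (α : ℝ) (hα : 0 < α) (A : E → ℝ) (hA : ContDiff ℝ 2 A)
    (hcoer : ∀ lam v : E, fderiv ℝ (fderiv ℝ A) lam v v ≥ α * ‖v‖ ^ 2) :
    ∀ lam lam' : E,
      ⟪lam - lam',
          gradient (fun μ => ⟪gradient A μ - gradient A lam', μ - lam'⟫) lam⟫ ≥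
        2 * α * ‖lam - lam'‖ ^ 2 := by
  intro lam lam'
  set w := lam - lam' with hw
  have hA' : ContDiff ℝ 1 (fderiv ℝ A) := hA.fderiv_right (by norm_num)
  set L : (E →L[ℝ] ℝ) →L[ℝ] E :=
    ((toDual ℝ E).symm.toContinuousLinearEquiv : (E →L[ℝ] ℝ) ≃L[ℝ] E).toContinuousLinearMap
    with hL
  have hGdef : ∀ μ : E, gradient A μ = L (fderiv ℝ A μ) := fun μ => rfl
  -- derivative of gradient A at lam
  have hf2 : HasFDerivAt (fderiv ℝ A) (fderiv ℝ (fderiv ℝ A) lam) lam :=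
    (hA'.differentiable one_ne_zero lam).hasFDerivAt
  set G' : E →L[ℝ] E := L.comp (fderiv ℝ (fderiv ℝ A) lam) with hG'
  have hG : HasFDerivAt (fun μ => gradient A μ - gradient A lam') G' lam := by
    have : HasFDerivAt (fun μ => L (fderiv ℝ A μ)) G' lam := L.hasFDerivAt.comp lam hf2
    simpa [hGdef] using this.sub_const (gradient A lam')
  have hId : HasFDerivAt (fun μ : E => μ - lam') (ContinuousLinearMap.id ℝ E) lam := by
    simpa using (hasFDerivAt_id lam).sub_const lam'
  set D' : E →L[ℝ] ℝ :=
    (fderivInnerCLM ℝ (gradient A lam - gradient A lam', lam - lam')).comp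
      (G'.prod (ContinuousLinearMap.id ℝ E)) with hD'
  have hD : HasFDerivAt (fun μ => ⟪gradient A μ - gradient A lam', μ - lam'⟫) D' lam :=
    HasFDerivAt.inner ℝ hG hId
  have hgradD : gradient (fun μ => ⟪gradient A μ - gradient A lam', μ - lam'⟫) lam =
      (toDual ℝ E).symm D' := (hD.hasGradientAt).gradient
  rw [hgradD, real_inner_comm, toDual_symm_apply]
  have hDval : D' w = ⟪gradient A lam - gradient A lam', w⟫ +
      ⟪L (fderiv ℝ (fderiv ℝ A) lam w), lam - lam'⟫ := by
    simp [hD', hG', fderivInnerCLM_apply]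
  have hLinner : ∀ (φ : E →L[ℝ] ℝ) (v : E), ⟪L φ, v⟫ = φ v := by
    intro φ v
    simpa [hL] using (toDual_symm_apply (𝕜 := ℝ) (E := E) (x := v) (y := φ))
  have term2 : ⟪L (fderiv ℝ (fderiv ℝ A) lam w), lam - lam'⟫ ≥ α * ‖w‖ ^ 2 := by
    rw [hLinner, ← hw]; exact hcoer lam w
  have term1 : ⟪gradient A lam - gradient A lam', w⟫ ≥ α * ‖w‖ ^ 2 := by
    rw [inner_sub_left, hGdef, hGdef, hLinner, hLinner]
    exact aux_strong_mono α A hA hcoer lam lam'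
  rw [hDval]
  linarith
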